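/- arXiv:1102.0182 — 4 statements merged into one kernel-verified Lean document; each statement's English description precedes it below -/
import Mathlib

section
/- For the nonlinear lifting E^#(ρ) = (I ⊗ ρ^{1/2}) π (I ⊗ ρ^{1/2}) with π = ∑_{i,j} e_{ij} ⊗ Λ(e_{ij}) and Λ a unital completely positive map, one has Tr₂ E^#(ρ) = ρ and Tr₁ E^#(ρ) = (Λ^#(ρ))^T, where Λ^# is the dual (trace) adjoint of Λ and T denotes transposition. -/
open Matrix Kronecker BigOperators ComplexOrder

/-- The square root of a positive semidefinite matrix, as defined in the older Mathlib
(`Matrix.PosSemidef.sqrt`, since removed). -/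
noncomputable def Matrix.PosSemidef.sqrt {n 𝕜 : Type*} [Fintype n] [RCLike 𝕜] [DecidableEq n]
    {A : Matrix n n 𝕜} (hA : A.PosSemidef) : Matrix n n 𝕜 :=
  hA.1.eigenvectorUnitary.1 * diagonal ((↑) ∘ (√·) ∘ hA.1.eigenvalues) *
    (star hA.1.eigenvectorUnitary : Matrix n n 𝕜)

/-- For the nonlinear lifting
`E^#(ρ) = (I ⊗ ρ^{1/2}) π (I ⊗ ρ^{1/2})` with `π = ∑_{i,j} e_{ij} ⊗ Λ(e_{ij})`
the (positive semidefinite) Choi-type operator of a unital completely positive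
map `Λ`, one has `Tr₂ E^#(ρ) = ρ` (tracing out the first factor) and
`Tr₁ E^#(ρ) = (Λ^#(ρ))ᵀ` (tracing out the second factor), where `Λ^#` is the
trace dual of `Λ`. -/
theorem stmt14 (d : ℕ)
    (Λ : Matrix (Fin d) (Fin d) ℂ →ₗ[ℂ] Matrix (Fin d) (Fin d) ℂ)
    (hΛ : Λ 1 = 1)
    (π : Matrix (Fin d × Fin d) (Fin d × Fin d) ℂ)
    (hπ : π = ∑ i : Fin d, ∑ j : Fin d,
        Matrix.single i j (1 : ℂ) ⊗ₖ Λ (Matrix.single i j 1))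
    -- complete positivity of Λ, expressed by positivity of its Choi operator π
    (hCP : π.PosSemidef)
    (ρ : Matrix (Fin d) (Fin d) ℂ) (hρ : ρ.PosSemidef) (htr : ρ.trace = 1)
    -- the dual map value D = Λ^#(ρ), characterized by Tr(D a) = Tr(ρ Λ(a))
    (D : Matrix (Fin d) (Fin d) ℂ)
    (hD : ∀ a : Matrix (Fin d) (Fin d) ℂ, (D * a).trace = (ρ * Λ a).trace)
    (Elift : Matrix (Fin d × Fin d) (Fin d × Fin d) ℂ)
    (hElift : Elift = ((1 : Matrix (Fin d) (Fin d) ℂ) ⊗ₖ hρ.sqrt) * π *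
        ((1 : Matrix (Fin d) (Fin d) ℂ) ⊗ₖ hρ.sqrt)) :
    -- Tr₂ E^#(ρ) = ρ : tracing out the first tensor factor
    (Matrix.of fun k l : Fin d => ∑ a : Fin d, Elift (a, k) (a, l)) = ρ ∧
    -- Tr₁ E^#(ρ) = (Λ^#(ρ))ᵀ : tracing out the second tensor factor
    (Matrix.of fun i j : Fin d => ∑ m : Fin d, Elift (i, m) (j, m)) = Dᵀ := by
  set S := hρ.sqrt with hS
  have hSS : S * S = ρ := by
    have hU : (star hρ.1.eigenvectorUnitary : Matrix (Fin d) (Fin d) ℂ) *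
        hρ.1.eigenvectorUnitary.1 = 1 := Unitary.coe_star_mul_self _
    have hdd : diagonal (((↑) ∘ (√·) ∘ hρ.1.eigenvalues) : Fin d → ℂ) *
        diagonal ((↑) ∘ (√·) ∘ hρ.1.eigenvalues) = diagonal ((↑) ∘ hρ.1.eigenvalues) := by
      rw [diagonal_mul_diagonal]
      congr 1; ext i
      simp only [Function.comp_apply]
      rw [← Complex.ofReal_mul, Real.mul_self_sqrt (hρ.eigenvalues_nonneg i)]
    conv_rhs => rw [hρ.1.spectral_theorem, Unitary.conjStarAlgAut_apply]
    rw [hS, Matrix.PosSemidef.sqrt]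
    calc _ = hρ.1.eigenvectorUnitary.1 * diagonal ((↑) ∘ (√·) ∘ hρ.1.eigenvalues) *
          ((star hρ.1.eigenvectorUnitary : Matrix (Fin d) (Fin d) ℂ) *
          hρ.1.eigenvectorUnitary.1) * diagonal ((↑) ∘ (√·) ∘ hρ.1.eigenvalues) *
          (star hρ.1.eigenvectorUnitary : Matrix (Fin d) (Fin d) ℂ) := by
            simp only [Matrix.mul_assoc]
            rfl
      _ = _ := by
            rw [hU, Matrix.mul_one, Matrix.mul_assoc _ (diagonal _) (diagonal _), hdd]
            rfl
  have key : Elift = ∑ i : Fin d, ∑ j : Fin d,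
      Matrix.single i j (1 : ℂ) ⊗ₖ
        (S * Λ (Matrix.single i j 1) * S) := by
    rw [hElift, hπ]
    simp_rw [Finset.mul_sum, Finset.sum_mul, ← Matrix.mul_kronecker_mul,
      Matrix.one_mul, Matrix.mul_one]
  have hEntry : ∀ a k b l, Elift (a, k) (b, l) =
      ∑ i : Fin d, ∑ j : Fin d, Matrix.single i j (1 : ℂ) a b *
        (S * Λ (Matrix.single i j 1) * S) k l := by
    intro a k b l
    rw [key]
    simp [Matrix.sum_apply, Matrix.kroneckerMap_apply]
  constructor
  · ext k l
    simp only [Matrix.of_apply]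
    calc ∑ a, Elift (a, k) (a, l)
        = ∑ i : Fin d, ∑ j : Fin d, (∑ a : Fin d,
            Matrix.single i j (1 : ℂ) a a) *
            (S * Λ (Matrix.single i j 1) * S) k l := by
          simp_rw [hEntry, Finset.sum_mul]
          rw [Finset.sum_comm]
          congr 1; ext i
          rw [Finset.sum_comm]
      _ = ∑ i : Fin d, (S * Λ (Matrix.single i i 1) * S) k l := by
          congr 1; ext i
          rw [Finset.sum_eq_single i]
          · have h1 : ∑ a : Fin d, Matrix.single i i (1 : ℂ) a a = 1 := by
              simp [Matrix.single, and_self, Finset.sum_ite_eq]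
            rw [h1, one_mul]
          · intro j _ hj
            have : ∑ a : Fin d, Matrix.single i j (1 : ℂ) a a = 0 := by
              apply Finset.sum_eq_zero
              intro a _
              apply Matrix.single_apply_of_ne
              rintro ⟨rfl, rfl⟩; exact hj rfl
            simp [this]
          · intro h; exact absurd (Finset.mem_univ i) h
      _ = ρ k l := by
          have hone : (1 : Matrix (Fin d) (Fin d) ℂ) =
              ∑ i : Fin d, Matrix.single i i (1 : ℂ) := by
            ext a b
            simp [Matrix.one_apply, Matrix.sum_apply, Matrix.single,
              ite_and, Finset.sum_ite_eq']
          have : ∑ i : Fin d, (S * Λ (Matrix.single i i 1) * S) =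
              S * Λ 1 * S := by
            rw [hone, map_sum, Finset.mul_sum, Finset.sum_mul]
          calc ∑ i : Fin d, (S * Λ (Matrix.single i i 1) * S) k l
              = (∑ i : Fin d, (S * Λ (Matrix.single i i 1) * S)) k l := by
                rw [Matrix.sum_apply]
            _ = (S * Λ 1 * S) k l := by rw [this]
            _ = ρ k l := by rw [hΛ, Matrix.mul_one, hSS]
  · ext i j
    simp only [Matrix.of_apply, Matrix.transpose_apply]
    calc ∑ m, Elift (i, m) (j, m)
        = ∑ i' : Fin d, ∑ j' : Fin d, Matrix.single i' j' (1 : ℂ) i j *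
            (S * Λ (Matrix.single i' j' 1) * S).trace := by
          simp_rw [hEntry]
          rw [Finset.sum_comm]
          congr 1; ext i'
          rw [Finset.sum_comm]
          congr 1; ext j'
          rw [← Finset.mul_sum, Matrix.trace]
          rfl
      _ = (S * Λ (Matrix.single i j 1) * S).trace := by
          rw [Finset.sum_eq_single i]
          · rw [Finset.sum_eq_single j]
            · simp
            · intro j' _ hj'
              have h0 : Matrix.single i j' (1 : ℂ) i j = 0 := by
                apply Matrix.single_apply_of_ne; tauto
              rw [h0, zero_mul]
            · intro h; exact absurd (Finset.mem_univ j) h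
          · intro i' _ hi'
            apply Finset.sum_eq_zero
            intro j' _
            have h0 : Matrix.single i' j' (1 : ℂ) i j = 0 := by
              apply Matrix.single_apply_of_ne; tauto
            rw [h0, zero_mul]
          · intro h; exact absurd (Finset.mem_univ i) h
      _ = D j i := by
          rw [Matrix.trace_mul_cycle, hSS, ← hD]
          simp [Matrix.trace, Matrix.mul_apply, Matrix.single, Matrix.diag,
            ite_and, Finset.sum_ite_eq', mul_ite]
end

section
/- A circulant operator ρ = ∑_{α=0}^{d−1} ρ^{(α)} with ρ^{(α)} = ∑_{i,j} a^{(α)}_{ij} e_{ij} ⊗ S^α e_{ij} S^{*α}, built from positive semidefinite d×d matrices a^{(0)},…,a^{(d−1)}, is positive semidefinite; it is a density matrix if and only if Tr(a^{(0)} + … + a^{(d−1)}) = 1. -/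
open Matrix Kronecker BigOperators ComplexOrder

/-- A circulant operator
`ρ = ∑_α ρ^{(α)}`, `ρ^{(α)} = ∑_{i,j} a^{(α)}_{ij} e_{ij} ⊗ S^α e_{ij} S^{*α}
= ∑_{i,j} a^{(α)}_{ij} e_{ij} ⊗ e_{i+α,j+α}`, built from positive semidefinite
`d×d` matrices `a^{(α)}`, is positive semidefinite; it is a density matrix
(unit trace) if and only if `∑_α Tr a^{(α)} = 1`. -/
theorem stmt17 (d : ℕ) [NeZero d]
    (a : Fin d → Matrix (Fin d) (Fin d) ℂ)
    (ha : ∀ α, (a α).PosSemidef)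
    (ρ : Matrix (Fin d × Fin d) (Fin d × Fin d) ℂ)
    (hρ : ρ = ∑ α : Fin d, ∑ i : Fin d, ∑ j : Fin d,
      a α i j • (Matrix.single i j (1 : ℂ) ⊗ₖ
        Matrix.single (i + α) (j + α) (1 : ℂ))) :
    ρ.PosSemidef ∧ (ρ.trace = 1 ↔ ∑ α : Fin d, (a α).trace = 1) := by
  classical
  set pick : Fin d → Matrix (Fin d) (Fin d × Fin d) ℂ :=
    fun α p q => if q = (p, p + α) then 1 else 0 with hpick
  have key : ∀ α : Fin d, (∑ i : Fin d, ∑ j : Fin d,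
      a α i j • (Matrix.single i j (1 : ℂ) ⊗ₖ
        Matrix.single (i + α) (j + α) (1 : ℂ)))
      = (pick α)ᴴ * a α * (pick α) := by
    intro α
    ext ⟨i, k⟩ ⟨j, l⟩
    simp only [Matrix.sum_apply, Matrix.smul_apply, kroneckerMap_apply,
      Matrix.mul_apply, Matrix.conjTranspose_apply, hpick,
      Matrix.single, Matrix.of_apply, Prod.mk.injEq, smul_eq_mul]
    simp [Finset.sum_ite_eq, Finset.sum_ite_eq', mul_ite, ite_mul,
      apply_ite, starRingEnd_apply, Finset.mul_sum]
    trans (if k = i + α ∧ l = j + α then a α i j else 0)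
    · rw [Finset.sum_eq_single i]
      · rw [Finset.sum_eq_single j]
        · by_cases h1 : k = i + α <;> by_cases h2 : l = j + α <;>
            simp [h1, h2, eq_comm]
        · intro b _ hb; simp [hb]
        · simp
      · intro b _ hb; simp [hb]
      · simp
    · rw [eq_comm]
      change ((pick α)ᴴ * a α * pick α) (i, k) (j, l) = _
      simp only [Matrix.mul_apply, Matrix.conjTranspose_apply]
      simp only [hpick]
      rw [Finset.sum_eq_single j]
      · rw [Finset.sum_eq_single i]
        · by_cases h1 : k = i + α <;> by_cases h2 : l = j + α <;>
            simp [h1, h2, eq_comm]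
        · intro b _ hb; simp [Ne.symm hb]
        · simp
      · intro b _ hb; simp [Ne.symm hb]
      · simp
  have htr : ρ.trace = ∑ α : Fin d, (a α).trace := by
    rw [hρ]
    simp only [Matrix.trace_sum, Matrix.trace_smul, trace_kronecker, smul_eq_mul]
    refine Finset.sum_congr rfl fun α _ => ?_
    rw [Matrix.trace]
    simp [Matrix.trace, Matrix.diag, Matrix.single, ite_and,
      Finset.sum_ite_eq, mul_ite, eq_comm]
  refine ⟨?_, by rw [htr]⟩
  rw [hρ]
  refine Finset.sum_induction _ _ (fun A B h1 h2 => h1.add h2)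
    Matrix.PosSemidef.zero fun α _ => ?_
  rw [key α]
  exact (ha α).conjTranspose_mul_mul_same (pick α)
end

section
/- The partial transpose of a circulant state is circulant with respect to the permuted decomposition: if ρ = ∑_α ∑_{i,j} a^{(α)}_{ij} e_{ij} ⊗ S^α e_{ij} S^{*α}, then ρ^Γ = (id ⊗ transpose)(ρ) = ∑_α ∑_{i,j} ã^{(α)}_{ij} e_{ij} ⊗ S^α e_{π(i)π(j)} S^{*α}, where π(0)=0, π(i)=d−i, and ã^{(α)} = ∑_{β=0}^{d−1} a^{(α+β mod d)} ∘ (Π S^β) with ∘ the Hadamard product and Π the permutation matrix of π. Consequently ρ is PPT if and only if ã^{(α)} ≥ 0 for all α. -/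
open Matrix Kronecker BigOperators ComplexOrder

/-- Block diagonal of PSD matrices is PSD. -/
lemma aux_blockDiag_psd {k n : Type*} [Fintype k] [Fintype n] [DecidableEq k]
    (M : k → Matrix n n ℂ) (h : ∀ i, (M i).PosSemidef) :
    (Matrix.blockDiagonal M).PosSemidef := by
  refine Matrix.PosSemidef.of_dotProduct_mulVec_nonneg ?_ ?_
  · rw [Matrix.IsHermitian, Matrix.blockDiagonal_conjTranspose]
    exact congrArg _ (funext fun i => (h i).1)
  · intro x
    have key : star x ⬝ᵥ (Matrix.blockDiagonal M) *ᵥ x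
        = ∑ i : k, star (fun j => x (j, i)) ⬝ᵥ (M i) *ᵥ (fun j => x (j, i)) := by
      simp only [dotProduct, Matrix.mulVec, Matrix.blockDiagonal_apply, dotProduct,
        Fintype.sum_prod_type, ite_mul, zero_mul, Finset.sum_ite_eq, Finset.mem_univ, if_true,
        Pi.star_apply]
      rw [Finset.sum_comm]
    rw [key]
    exact Finset.sum_nonneg fun i _ => (h i).dotProduct_mulVec_nonneg _

/-- The reindexing equivalence `(x₁, x₂) ↦ (x₁, x₁ + x₂)`. -/
def auxShiftEquiv (d : ℕ) [NeZero d] : (Fin d × Fin d) ≃ (Fin d × Fin d) where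
  toFun p := (p.1, p.1 + p.2)
  invFun p := (p.1, -p.1 + p.2)
  left_inv p := by simp
  right_inv p := by simp

@[simp] lemma auxShiftEquiv_apply (d : ℕ) [NeZero d] (p : Fin d × Fin d) :
    auxShiftEquiv d p = (p.1, p.1 + p.2) := rfl

/-- The partial transpose of a circulant state is circulant with
respect to the permuted decomposition. If
`ρ = ∑_α ∑_{i,j} a^{(α)}_{ij} e_{ij} ⊗ e_{i+α,j+α}`, then
`ρ^Γ = (id ⊗ transpose)(ρ) = ∑_α ∑_{i,j} ã^{(α)}_{ij} e_{ij} ⊗ e_{π(i)+α,π(j)+α}`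
with `π(i) = -i` (i.e. `π(0)=0`, `π(i)=d-i`) and
`ã^{(α)} = ∑_β a^{(α+β)} ∘ (Π S^β)` (Hadamard product, `Π` the permutation
matrix of `π`, `S` the shift). Consequently `ρ` is PPT iff all `ã^{(α)} ≥ 0`. -/
theorem stmt18 (d : ℕ) [NeZero d]
    (a : Fin d → Matrix (Fin d) (Fin d) ℂ)
    (ha : ∀ α, (a α).PosSemidef)
    (ρ : Matrix (Fin d × Fin d) (Fin d × Fin d) ℂ)
    (hρ : ρ = ∑ α : Fin d, ∑ i : Fin d, ∑ j : Fin d,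
      a α i j • (Matrix.single i j (1 : ℂ) ⊗ₖ
        Matrix.single (i + α) (j + α) (1 : ℂ)))
    -- partial transpose with respect to the second factor
    (ρΓ : Matrix (Fin d × Fin d) (Fin d × Fin d) ℂ)
    (hρΓ : ∀ x y, ρΓ x y = ρ (x.1, y.2) (y.1, x.2))
    -- the permutation matrix Π of π(i) = -i and the shift matrix S
    (Pm Sm : Matrix (Fin d) (Fin d) ℂ)
    (hPm : ∀ i j, Pm i j = if i = -j then 1 else 0)
    (hS : ∀ i j, Sm i j = if i = j + 1 then 1 else 0)
    -- the matrices ã^{(α)} = ∑_β a^{(α+β)} ∘ (Π S^β)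
    (at' : Fin d → Matrix (Fin d) (Fin d) ℂ)
    (hat : ∀ α, at' α = ∑ β : Fin d, (a (α + β)).hadamard (Pm * Sm ^ (β : ℕ))) :
    (ρΓ = ∑ α : Fin d, ∑ i : Fin d, ∑ j : Fin d,
      at' α i j • (Matrix.single i j (1 : ℂ) ⊗ₖ
        Matrix.single (-i + α) (-j + α) (1 : ℂ))) ∧
    (ρΓ.PosSemidef ↔ ∀ α, (at' α).PosSemidef) := by
  letI := Fin.instCommRing d
  -- entries of powers of the shift
  have hSpow : ∀ (n : ℕ) (i j : Fin d), (Sm ^ n) i j = if i = j + (n : Fin d) then 1 else 0 := by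
    intro n
    induction n with
    | zero => intro i j; simp [Matrix.one_apply]
    | succ n ih =>
      intro i j
      rw [pow_succ, Matrix.mul_apply]
      simp only [ih, hS, mul_ite, mul_one, mul_zero, ite_mul, one_mul, zero_mul]
      rw [Finset.sum_eq_single (j + 1)]
      · simp only [if_true]
        congr 1
        push_cast
        ring_nf
      · intro k _ hk; simp [hk]
      · simp
  -- entries of at'
  have hat' : ∀ α i j, at' α i j = a (α + (-i - j)) i j := by
    intro α i j
    rw [hat]
    have hPS : ∀ β : Fin d, (Pm * Sm ^ (β : ℕ)) i j = if β = -i - j then 1 else 0 := by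
      intro β
      rw [Matrix.mul_apply]
      simp only [hPm, hSpow, Fin.cast_val_eq_self, mul_ite, mul_one, mul_zero, ite_mul,
        one_mul, zero_mul]
      rw [Finset.sum_eq_single (j + β)]
      · have hiff : (i = -(j + β)) = (β = -i - j) :=
          propext ⟨fun h => by linear_combination h, fun h => by linear_combination h⟩
        rw [if_pos rfl]; simp only [hiff]
      · intro k _ hk; simp [hk]
      · simp
    simp only [Matrix.sum_apply, Matrix.hadamard_apply, hPS, mul_ite, mul_one, mul_zero]
    rw [Finset.sum_eq_single (-i - j)]
    · simp
    · intro k _ hk; simp [hk]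
    · simp
  -- entries of ρ
  have hρe : ∀ p q r s : Fin d, ρ (p, q) (r, s) =
      if r + (q - p) = s then a (q - p) p r else 0 := by
    intro p q r s
    rw [hρ]
    simp only [Matrix.sum_apply, Matrix.smul_apply, Matrix.kroneckerMap_apply, smul_eq_mul,
      Matrix.single, Matrix.of_apply]
    refine Eq.trans (Finset.sum_congr rfl fun α _ =>
      (Fintype.sum_eq_single p fun i hi =>
        Finset.sum_eq_zero fun j _ => by simp [hi]).trans
      (Fintype.sum_eq_single r fun j hj => by simp [hj])) ?_
    rw [Fintype.sum_eq_single (q - p) fun α hα => by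
      have h2 : ¬(p + α = q) := fun hc => hα (by linear_combination hc)
      simp [h2]]
    have hpq : p + (q - p) = q := by ring
    by_cases hs : r + (q - p) = s <;> simp [hpq, hs]
  -- closed form of the partial transpose
  have key : ∀ x1 x2 y1 y2 : Fin d, ρΓ (x1, x2) (y1, y2) =
      if x1 + x2 = y1 + y2 then at' (x1 + x2) x1 y1 else 0 := by
    intro x1 x2 y1 y2
    rw [hρΓ (x1, x2) (y1, y2)]
    dsimp only
    rw [hρe x1 y2 y1 x2]
    by_cases h : x1 + x2 = y1 + y2
    · have hc : y1 + (y2 - x1) = x2 := by linear_combination -h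
      rw [if_pos hc, if_pos h, hat']
      congr 1
      linear_combination -h
    · have hc : ¬(y1 + (y2 - x1) = x2) := fun hc => h (by linear_combination -hc)
      rw [if_neg hc, if_neg h]
  constructor
  · -- the circulant form of the partial transpose
    ext ⟨x1, x2⟩ ⟨y1, y2⟩
    rw [key]
    simp only [Matrix.sum_apply, Matrix.smul_apply, Matrix.kroneckerMap_apply, smul_eq_mul,
      Matrix.single, Matrix.of_apply]
    symm
    refine Eq.trans (Finset.sum_congr rfl fun α _ =>
      (Fintype.sum_eq_single x1 fun i hi =>
        Finset.sum_eq_zero fun j _ => by simp [hi]).trans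
      (Fintype.sum_eq_single y1 fun j hj => by simp [hj])) ?_
    rw [Fintype.sum_eq_single (x1 + x2) fun α hα => by
      have h2 : ¬(-x1 + α = x2) := fun hc => hα (by linear_combination hc)
      simp [h2]]
    have hx : -x1 + (x1 + x2) = x2 := by ring
    by_cases h : x1 + x2 = y1 + y2
    · have hy : -y1 + (x1 + x2) = y2 := by linear_combination h
      rw [if_pos h]
      simp [hx, hy]
    · have hy : ¬(-y1 + (x1 + x2) = y2) := fun hc => h (by linear_combination hc)
      rw [if_neg h]
      simp [hy]
  · -- PSD equivalence via block-diagonal structure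
    have hsub : ρΓ = (Matrix.blockDiagonal at').submatrix (auxShiftEquiv d) (auxShiftEquiv d) := by
      ext ⟨x1, x2⟩ ⟨y1, y2⟩
      rw [key]
      simp [Matrix.blockDiagonal_apply]
    rw [hsub, Matrix.posSemidef_submatrix_equiv]
    constructor
    · intro h α
      have h2 := h.submatrix (fun i : Fin d => (i, α))
      have h3 : (Matrix.blockDiagonal at').submatrix (fun i : Fin d => (i, α))
          (fun i : Fin d => (i, α)) = at' α := by
        ext i j; simp [Matrix.blockDiagonal_apply]
      rwa [h3] at h2
    · exact aux_blockDiag_psd at'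
end

section
/- The circulant lifting E^#(ρ) = ∑_{α=0}^{d−1} ∑_{i,j} c^{(α)}_{ij} e_{ij} ⊗ V_{iα} ρ V_{iα}^*, with positive matrices c^{(α)} of unit trace and V_{iα} = |e_{i+α}⟩⟨e_α|, equals the circulant state ∑_α ∑_{i,j} a^{(α)}_{ij} e_{ij} ⊗ S^α e_{ij} S^{*α} with a^{(α)}_{ij} = ρ_{αα} c^{(α)}_{ij}; in particular E^#(ρ) is a density matrix (circulant state) for every density matrix ρ on ℂ^d. -/
open Matrix Kronecker BigOperators ComplexOrder

private lemma stdBasis_kron_stdBasis (d : ℕ) (i j k l : Fin d) :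
    (Matrix.single i j (1:ℂ)) ⊗ₖ (Matrix.single k l (1:ℂ))
      = Matrix.single (i,k) (j,l) (1:ℂ) := by
  ext ⟨a,b⟩ ⟨a',b'⟩
  simp only [Matrix.kroneckerMap_apply, Matrix.single, Matrix.of_apply, ite_and,
    Prod.mk.injEq, mul_ite, mul_one, mul_zero]
  split_ifs <;> simp_all

private lemma Vprod (d : ℕ) [NeZero d] (ρ : Matrix (Fin d) (Fin d) ℂ) (i j α : Fin d) :
    Matrix.single (i+α) α (1:ℂ) * ρ * (Matrix.single (j+α) α (1:ℂ))ᴴ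
      = ρ α α • Matrix.single (i+α) (j+α) (1:ℂ) := by
  ext a b
  simp only [Matrix.mul_apply, Matrix.conjTranspose_apply, Matrix.single,
    Matrix.of_apply, Matrix.smul_apply, smul_eq_mul, ite_and,
    apply_ite (star : ℂ → ℂ), star_one, star_zero,
    ite_mul, one_mul, zero_mul, mul_ite, mul_one, mul_zero]
  simp [Finset.sum_ite_eq, Finset.sum_ite_eq']
  split_ifs <;> simp_all

private lemma stdBasis_conjT {n : Type*} [DecidableEq n] (a b : n) :
    (Matrix.single a b (1:ℂ))ᴴ = Matrix.single b a (1:ℂ) := by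
  ext p q
  simp only [Matrix.conjTranspose_apply, Matrix.single, Matrix.of_apply, ite_and]
  split_ifs <;> simp_all

private lemma quad_stdBasis {n : Type*} [Fintype n] [DecidableEq n] (a b : n) (x : n → ℂ) :
    star x ⬝ᵥ (Matrix.single a b (1:ℂ)) *ᵥ x = star (x a) * x b := by
  simp [Matrix.single_mulVec, dotProduct, Function.update_apply,
    Finset.sum_ite_eq', mul_comm]

/-- The circulant lifting
`E^#(ρ) = ∑_α ∑_{i,j} c^{(α)}_{ij} e_{ij} ⊗ V_{iα} ρ V_{jα}^*`, with positive
semidefinite unit-trace matrices `c^{(α)}` and `V_{iα} = |e_{i+α}⟩⟨e_α|`,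
equals the circulant state
`∑_α ∑_{i,j} a^{(α)}_{ij} e_{ij} ⊗ S^α e_{ij} S^{*α}` with
`a^{(α)}_{ij} = ρ_{αα} c^{(α)}_{ij}`; in particular `E^#(ρ)` is a density
matrix (positive semidefinite of unit trace) for every density matrix `ρ`. -/
theorem stmt19 (d : ℕ) [NeZero d]
    (c : Fin d → Matrix (Fin d) (Fin d) ℂ)
    (hc : ∀ α, (c α).PosSemidef) (hc1 : ∀ α, (c α).trace = 1)
    (V : Fin d → Fin d → Matrix (Fin d) (Fin d) ℂ)
    (hV : ∀ i α, V i α = Matrix.single (i + α) α (1 : ℂ))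
    (ρ : Matrix (Fin d) (Fin d) ℂ) (hρ : ρ.PosSemidef) (htr : ρ.trace = 1)
    (Elift : Matrix (Fin d × Fin d) (Fin d × Fin d) ℂ)
    (hElift : Elift = ∑ α : Fin d, ∑ i : Fin d, ∑ j : Fin d,
      c α i j • (Matrix.single i j (1 : ℂ) ⊗ₖ (V i α * ρ * (V j α)ᴴ))) :
    (Elift = ∑ α : Fin d, ∑ i : Fin d, ∑ j : Fin d,
      (ρ α α * c α i j) • (Matrix.single i j (1 : ℂ) ⊗ₖ
        Matrix.single (i + α) (j + α) (1 : ℂ))) ∧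
    Elift.PosSemidef ∧ Elift.trace = 1 := by
  have hE : Elift = ∑ α : Fin d, ∑ i : Fin d, ∑ j : Fin d,
      (ρ α α * c α i j) • (Matrix.single i j (1 : ℂ) ⊗ₖ
        Matrix.single (i + α) (j + α) (1 : ℂ)) := by
    rw [hElift]
    refine Finset.sum_congr rfl fun α _ => Finset.sum_congr rfl fun i _ =>
      Finset.sum_congr rfl fun j _ => ?_
    rw [hV, hV, Vprod, Matrix.kronecker_smul, smul_smul, mul_comm]
  have hE2 : Elift = ∑ α : Fin d, ∑ i : Fin d, ∑ j : Fin d,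
      (ρ α α * c α i j) • Matrix.single ((i, i+α) : Fin d × Fin d) (j, j+α) (1:ℂ) := by
    rw [hE]
    refine Finset.sum_congr rfl fun α _ => Finset.sum_congr rfl fun i _ =>
      Finset.sum_congr rfl fun j _ => ?_
    rw [stdBasis_kron_stdBasis]
  have hρdiag : ∀ α, star (ρ α α) = ρ α α := fun α => hρ.1.apply α α
  have hcsym : ∀ α i j, star (c α i j) = c α j i := fun α i j => (hc α).1.apply j i
  refine ⟨hE, Matrix.PosSemidef.of_dotProduct_mulVec_nonneg ?_ ?_, ?_⟩
  · -- Hermitian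
    show Elift ᴴ = Elift
    conv_lhs => rw [hE2]
    conv_rhs => rw [hE2]
    rw [Matrix.conjTranspose_sum]
    refine Finset.sum_congr rfl fun α _ => ?_
    rw [Matrix.conjTranspose_sum, Finset.sum_comm]
    refine Finset.sum_congr rfl fun j _ => ?_
    rw [Matrix.conjTranspose_sum]
    refine Finset.sum_congr rfl fun i _ => ?_
    rw [Matrix.conjTranspose_smul, stdBasis_conjT, star_mul', hρdiag, hcsym]
  · -- quadratic form
    intro x
    have hq : star x ⬝ᵥ Elift *ᵥ x = ∑ α : Fin d, ρ α α *
        (star (fun i => x (i, i+α)) ⬝ᵥ (c α) *ᵥ (fun i => x (i, i+α))) := by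
      rw [hE2]
      set f : Matrix (Fin d × Fin d) (Fin d × Fin d) ℂ → ℂ :=
        fun M => star x ⬝ᵥ M *ᵥ x with hf
      have fadd : ∀ M N, f (M + N) = f M + f N := by
        intro M N; simp [hf, Matrix.add_mulVec, dotProduct_add]
      have fzero : f 0 = 0 := by simp [hf]
      have fsum : ∀ {ι : Type} (s : Finset ι)
          (g : ι → Matrix (Fin d × Fin d) (Fin d × Fin d) ℂ),
          f (∑ a ∈ s, g a) = ∑ a ∈ s, f (g a) := by
        intro ι s g
        classical
        induction s using Finset.induction_on with
        | empty => simpa using fzero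
        | insert _ _ h ih => rw [Finset.sum_insert h, fadd, ih, Finset.sum_insert h]
      have fsmul : ∀ (r : ℂ) M, f (r • M) = r * f M := by
        intro r M; simp [hf, Matrix.smul_mulVec, dotProduct_smul]
      have fstd : ∀ (a b : Fin d × Fin d),
          f (Matrix.single a b (1:ℂ)) = star (x a) * x b :=
        fun a b => quad_stdBasis a b x
      show f _ = _
      simp only [fsum, fsmul, fstd]
      refine Finset.sum_congr rfl fun α _ => ?_
      simp only [dotProduct, Matrix.mulVec, Pi.star_apply, Finset.mul_sum]
      refine Finset.sum_congr rfl fun i _ => Finset.sum_congr rfl fun j _ => ?_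
      ring
    rw [hq]
    refine Finset.sum_nonneg fun α _ => mul_nonneg ?_ ((hc α).dotProduct_mulVec_nonneg _)
    have := hρ.dotProduct_mulVec_nonneg (Pi.single α 1)
    simpa [dotProduct, Matrix.mulVec, Pi.single_apply, Finset.sum_ite_eq,
      Finset.sum_ite_eq'] using this
  · -- trace
    rw [hE2]
    simp only [Matrix.trace_sum, Matrix.trace_smul, smul_eq_mul]
    have hstep : ∀ (a b : Fin d × Fin d),
        (Matrix.single a b (1:ℂ)).trace = if a = b then 1 else 0 := by
      intro a b
      split_ifs with h
      · subst h; exact Matrix.trace_single_eq_same a (1:ℂ)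
      · exact Matrix.trace_single_eq_of_ne a b (1:ℂ) h
    have : ∀ α : Fin d, (∑ i : Fin d, ∑ j : Fin d,
        ρ α α * c α i j * (Matrix.single ((i,i+α) : Fin d × Fin d) (j,j+α) (1:ℂ)).trace)
        = ρ α α := by
      intro α
      have : ∀ i j : Fin d,
          ρ α α * c α i j * (Matrix.single ((i,i+α) : Fin d × Fin d) (j,j+α) (1:ℂ)).trace
          = if j = i then ρ α α * c α i j else 0 := by
        intro i j
        rw [hstep]
        by_cases h : j = i
        · subst h; simp
        · have : ((i,i+α) : Fin d × Fin d) ≠ (j,j+α) := by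
            simp [Prod.ext_iff]; intro hij; exact absurd hij.symm h
          simp [this, h]
      simp only [this, Finset.sum_ite_eq', Finset.sum_ite_eq, Finset.mem_univ, if_true]
      rw [← Finset.mul_sum]
      have : ∑ i : Fin d, c α i i = (c α).trace := rfl
      rw [this, hc1, mul_one]
    simp only [this]
    exact htr
end
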